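/- Let θ ∈ ℝ with cos θ ≠ 1, and let B = (I - R_θ)⁻¹ where R_θ is the 2×2 real rotation matrix [[cos θ, -sin θ], [sin θ, cos θ]]. Writing B = [[B₁₁, B₁₂], [B₂₁, B₂₂]], one has 1 + B₂₁² + B₁₂² - B₁₂B₂₁ - B₂₂B₁₁ = 3/(4sin²(θ/2)); consequently (1 + B₂₁² + B₁₂² - B₁₂B₂₁ - B₂₂B₁₁)/(6 sin²(θ/2)) = 1/(8 sin⁴(θ/2)). -/

import Mathlib

open Real Matrix

/-- For `θ ∈ ℝ` with `cos θ ≠ 1` and `B = (I - R_θ)⁻¹` where `R_θ` is the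
rotation matrix of angle `θ`, one has
`1 + B₂₁² + B₁₂² - B₁₂B₂₁ - B₂₂B₁₁ = 3/(4 sin²(θ/2))`, and consequently
`(1 + B₂₁² + B₁₂² - B₁₂B₂₁ - B₂₂B₁₁)/(6 sin²(θ/2)) = 1/(8 sin⁴(θ/2))`. -/
theorem b1_entry_identity (θ : ℝ) (hθ : Real.cos θ ≠ 1)
    (R B : Matrix (Fin 2) (Fin 2) ℝ)
    (hR : R = !![Real.cos θ, -Real.sin θ; Real.sin θ, Real.cos θ])
    (hB : B = (1 - R)⁻¹) :
    1 + (B 1 0) ^ 2 + (B 0 1) ^ 2 - B 0 1 * B 1 0 - B 1 1 * B 0 0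
      = 3 / (4 * Real.sin (θ / 2) ^ 2) ∧
    (1 + (B 1 0) ^ 2 + (B 0 1) ^ 2 - B 0 1 * B 1 0 - B 1 1 * B 0 0)
        / (6 * Real.sin (θ / 2) ^ 2)
      = 1 / (8 * Real.sin (θ / 2) ^ 4) := by
  set c := Real.cos θ with hc
  set sn := Real.sin θ with hsn
  have hd : (1 : ℝ) - c ≠ 0 := sub_ne_zero.mpr (fun h => hθ h.symm)
  have hd2 : (2 : ℝ) * (1 - c) ≠ 0 := by positivity
  have hsq : sn ^ 2 = 1 - c ^ 2 := Real.sin_sq θ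
  have hBC : B = !![(1 - c) / (2 * (1 - c)), -sn / (2 * (1 - c));
      sn / (2 * (1 - c)), (1 - c) / (2 * (1 - c))] := by
    rw [hB]
    apply Matrix.inv_eq_right_inv
    ext i j
    fin_cases i <;> fin_cases j <;>
      simp [hR, Matrix.mul_apply, Fin.sum_univ_two, Matrix.one_apply] <;>
      field_simp <;> nlinarith [hsq]
  have hhalf : Real.sin (θ / 2) ^ 2 = (1 - c) / 2 := by
    have h1 : c = Real.cos (2 * (θ / 2)) := by rw [hc]; congr 1; ring
    rw [Real.cos_two_mul, Real.cos_sq'] at h1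
    linarith
  have hB00 : B 0 0 = (1 - c) / (2 * (1 - c)) := by rw [hBC]; simp
  have hB01 : B 0 1 = -sn / (2 * (1 - c)) := by rw [hBC]; simp
  have hB10 : B 1 0 = sn / (2 * (1 - c)) := by rw [hBC]; simp
  have hB11 : B 1 1 = (1 - c) / (2 * (1 - c)) := by rw [hBC]; simp
  have key : 1 + (B 1 0) ^ 2 + (B 0 1) ^ 2 - B 0 1 * B 1 0 - B 1 1 * B 0 0
      = 3 / (4 * Real.sin (θ / 2) ^ 2) := by
    have hsn2 : sn ^ 2 = (1 - c) * (1 + c) := by rw [hsq]; ring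
    rw [hB00, hB01, hB10, hB11, hhalf]
    field_simp
    linear_combination 12 * hsn2
  refine ⟨key, ?_⟩
  rw [key]
  have hs : Real.sin (θ / 2) ≠ 0 := by
    intro h
    rw [h] at hhalf
    simp at hhalf
    exact hd (by linarith)
  field_simp
  ring
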